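/- Let R = ℚ[a0, a1, b0]/J⁻ with J⁻ as in Theorem coho3n. Then the degree-3 graded piece of R is one-dimensional, spanned by the class of a1·a0², and a0³ = −(32/3)·a1·a0² in R. -/

import Mathlib

open MvPolynomial

noncomputable def a0 : MvPolynomial (Fin 3) ℚ := X 0
noncomputable def a1 : MvPolynomial (Fin 3) ℚ := X 1
noncomputable def b0 : MvPolynomial (Fin 3) ℚ := X 2

noncomputable def Jminus : Ideal (MvPolynomial (Fin 3) ℚ) :=
  Ideal.span {3 * b0 ^ 2 + 6 * a1 * b0 - a0 * b0, 2 * a1 * b0 - a1 * a0,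
    12 * a1 ^ 2 + a1 * a0, a0 ^ 2 * b0, 3 * a0 ^ 3 + 32 * a1 * a0 ^ 2}

noncomputable def gradedPiece (d : ℕ) :
    Submodule ℚ (MvPolynomial (Fin 3) ℚ ⧸ Jminus) :=
  (MvPolynomial.homogeneousSubmodule (Fin 3) ℚ d).map
    (Ideal.Quotient.mkₐ ℚ Jminus).toLinearMap

-- generator membership
lemma memG1 : (3 * b0 ^ 2 + 6 * a1 * b0 - a0 * b0) ∈ Jminus :=
  Ideal.subset_span (Set.mem_insert _ _)
lemma memG2 : (2 * a1 * b0 - a1 * a0) ∈ Jminus :=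
  Ideal.subset_span (Set.mem_insert_of_mem _ (Set.mem_insert _ _))
lemma memG3 : (12 * a1 ^ 2 + a1 * a0) ∈ Jminus :=
  Ideal.subset_span (Set.mem_insert_of_mem _ (Set.mem_insert_of_mem _ (Set.mem_insert _ _)))
lemma memG4 : (a0 ^ 2 * b0) ∈ Jminus :=
  Ideal.subset_span (Set.mem_insert_of_mem _ (Set.mem_insert_of_mem _
    (Set.mem_insert_of_mem _ (Set.mem_insert _ _))))
lemma memG5 : (3 * a0 ^ 3 + 32 * a1 * a0 ^ 2) ∈ Jminus :=
  Ideal.subset_span (Set.mem_insert_of_mem _ (Set.mem_insert_of_mem _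
    (Set.mem_insert_of_mem _ (Set.mem_insert_of_mem _ rfl))))

lemma comb_mem (q1 q2 q3 q4 q5 : MvPolynomial (Fin 3) ℚ) :
    q1 * (3 * b0 ^ 2 + 6 * a1 * b0 - a0 * b0) + q2 * (2 * a1 * b0 - a1 * a0)
      + q3 * (12 * a1 ^ 2 + a1 * a0) + q4 * (a0 ^ 2 * b0)
      + q5 * (3 * a0 ^ 3 + 32 * a1 * a0 ^ 2) ∈ Jminus := by
  exact add_mem (add_mem (add_mem (add_mem (Ideal.mul_mem_left _ _ memG1)
    (Ideal.mul_mem_left _ _ memG2)) (Ideal.mul_mem_left _ _ memG3))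
    (Ideal.mul_mem_left _ _ memG4)) (Ideal.mul_mem_left _ _ memG5)

lemma mk_smul (c : ℚ) (x : MvPolynomial (Fin 3) ℚ) :
    c • Ideal.Quotient.mk Jminus x = Ideal.Quotient.mk Jminus (C c * x) := by
  rw [← smul_eq_C_mul, ← Ideal.Quotient.mkₐ_eq_mk ℚ, map_smul]

noncomputable def mono (i j k : ℕ) : Fin 3 →₀ ℕ :=
  Finsupp.single 0 i + Finsupp.single 1 j + Finsupp.single 2 k

@[simp] lemma mono_apply0 (i j k : ℕ) : mono i j k 0 = i := by simp [mono]
@[simp] lemma mono_apply1 (i j k : ℕ) : mono i j k 1 = j := by simp [mono, Finsupp.single_apply]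
@[simp] lemma mono_apply2 (i j k : ℕ) : mono i j k 2 = k := by simp [mono, Finsupp.single_apply]

lemma eq_mono (u : Fin 3 →₀ ℕ) : u = mono (u 0) (u 1) (u 2) := by
  ext i; fin_cases i <;> simp [mono, Finsupp.single_apply]

lemma mono_eq_iff {a b c d e f : ℕ} : mono a b c = mono d e f ↔ a = d ∧ b = e ∧ c = f := by
  constructor
  · intro h
    exact ⟨by simpa using congrArg (fun g => g 0) h, by simpa using congrArg (fun g => g 1) h,
      by simpa using congrArg (fun g => g 2) h⟩
  · rintro ⟨rfl, rfl, rfl⟩; rfl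

lemma monomial_mono (i j k : ℕ) (c : ℚ) :
    (monomial (mono i j k) c : MvPolynomial (Fin 3) ℚ) = C c * X 0 ^ i * X 1 ^ j * X 2 ^ k := by
  simp [mono, X_pow_eq_monomial, C_mul_monomial, monomial_mul, add_assoc]

noncomputable def L (i j k : ℕ) : ℚ :=
  if i = 3 ∧ j = 0 ∧ k = 0 then -1536
  else if i = 2 ∧ j = 1 ∧ k = 0 then 144
  else if i = 1 ∧ j = 2 ∧ k = 0 then -12
  else if i = 1 ∧ j = 1 ∧ k = 1 then 72
  else if i = 1 ∧ j = 0 ∧ k = 2 then -144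
  else if i = 0 ∧ j = 3 ∧ k = 0 then 1
  else if i = 0 ∧ j = 2 ∧ k = 1 then -6
  else if i = 0 ∧ j = 1 ∧ k = 2 then 36
  else if i = 0 ∧ j = 0 ∧ k = 3 then -120
  else 0

noncomputable def phi (p : MvPolynomial (Fin 3) ℚ) : ℚ :=
  -1536 * coeff (mono 3 0 0) p + 144 * coeff (mono 2 1 0) p - 12 * coeff (mono 1 2 0) p
  + 72 * coeff (mono 1 1 1) p - 144 * coeff (mono 1 0 2) p + coeff (mono 0 3 0) p
  - 6 * coeff (mono 0 2 1) p + 36 * coeff (mono 0 1 2) p - 120 * coeff (mono 0 0 3) p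

lemma phi_add (p q : MvPolynomial (Fin 3) ℚ) : phi (p + q) = phi p + phi q := by
  simp [phi, coeff_add]; ring

lemma phi_monomial (i j k : ℕ) (c : ℚ) :
    phi (monomial (mono i j k) c) = c * L i j k := by
  simp only [phi, coeff_monomial, mono_eq_iff, L]
  by_cases h : i + j + k = 3
  · have hi : i ≤ 3 := by omega
    have hj : j ≤ 3 := by omega
    have hk : k ≤ 3 := by omega
    interval_cases i <;> interval_cases j <;> interval_cases k <;>
      first | (exfalso; omega) | (norm_num; try ring)
  · rw [if_neg (by omega), if_neg (by omega), if_neg (by omega), if_neg (by omega),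
      if_neg (by omega), if_neg (by omega), if_neg (by omega), if_neg (by omega),
      if_neg (by omega), if_neg (by omega), if_neg (by omega), if_neg (by omega),
      if_neg (by omega), if_neg (by omega), if_neg (by omega), if_neg (by omega),
      if_neg (by omega), if_neg (by omega)]
    ring

lemma L_ne {i j k : ℕ} (h : i + j + k ≠ 3) : L i j k = 0 := by
  simp only [L]
  rw [if_neg (by omega), if_neg (by omega), if_neg (by omega), if_neg (by omega),
    if_neg (by omega), if_neg (by omega), if_neg (by omega), if_neg (by omega), if_neg (by omega)]

lemma Lg1 (n0 n1 n2 : ℕ) :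
    3 * L n0 n1 (n2+2) + 6 * L n0 (n1+1) (n2+1) - L (n0+1) n1 (n2+1) = 0 := by
  by_cases h : n0 + n1 + n2 = 1
  · have h0 : n0 ≤ 1 := by omega
    have h1 : n1 ≤ 1 := by omega
    have h2 : n2 ≤ 1 := by omega
    interval_cases n0 <;> interval_cases n1 <;> interval_cases n2 <;>
      first | (exfalso; omega) | norm_num [L]
  · rw [L_ne (by omega), L_ne (by omega), L_ne (by omega)]; ring

lemma Lg2 (n0 n1 n2 : ℕ) : 2 * L n0 (n1+1) (n2+1) - L (n0+1) (n1+1) n2 = 0 := by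
  by_cases h : n0 + n1 + n2 = 1
  · have h0 : n0 ≤ 1 := by omega
    have h1 : n1 ≤ 1 := by omega
    have h2 : n2 ≤ 1 := by omega
    interval_cases n0 <;> interval_cases n1 <;> interval_cases n2 <;>
      first | (exfalso; omega) | norm_num [L]
  · rw [L_ne (by omega), L_ne (by omega)]; ring

lemma Lg3 (n0 n1 n2 : ℕ) : 12 * L n0 (n1+2) n2 + L (n0+1) (n1+1) n2 = 0 := by
  by_cases h : n0 + n1 + n2 = 1
  · have h0 : n0 ≤ 1 := by omega
    have h1 : n1 ≤ 1 := by omega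
    have h2 : n2 ≤ 1 := by omega
    interval_cases n0 <;> interval_cases n1 <;> interval_cases n2 <;>
      first | (exfalso; omega) | norm_num [L]
  · rw [L_ne (by omega), L_ne (by omega)]; ring

lemma Lg4 (n0 n1 n2 : ℕ) : L (n0+2) n1 (n2+1) = 0 := by
  by_cases h : n0 + n1 + n2 = 0
  · obtain ⟨rfl, rfl, rfl⟩ : n0 = 0 ∧ n1 = 0 ∧ n2 = 0 := by omega
    norm_num [L]
  · rw [L_ne (by omega)]

lemma Lg5 (n0 n1 n2 : ℕ) : 3 * L (n0+3) n1 n2 + 32 * L (n0+2) (n1+1) n2 = 0 := by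
  by_cases h : n0 + n1 + n2 = 0
  · obtain ⟨rfl, rfl, rfl⟩ : n0 = 0 ∧ n1 = 0 ∧ n2 = 0 := by omega
    norm_num [L]
  · rw [L_ne (by omega), L_ne (by omega)]; ring

lemma phi_zero : phi 0 = 0 := by simp [phi]

lemma phi_mul_g1 (c : MvPolynomial (Fin 3) ℚ) :
    phi (c * (3 * X 2 ^ 2 + 6 * X 1 * X 2 - X 0 * X 2)) = 0 := by
  induction c using MvPolynomial.induction_on' with
  | add p q hp hq => rw [add_mul, phi_add, hp, hq, add_zero]
  | monomial u a =>
    rw [eq_mono u]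
    have expand : monomial (mono (u 0) (u 1) (u 2)) a * (3 * X 2 ^ 2 + 6 * X 1 * X 2 - X 0 * X 2)
        = monomial (mono (u 0) (u 1) (u 2 + 2)) (3 * a)
          + (monomial (mono (u 0) (u 1 + 1) (u 2 + 1)) (6 * a)
          + monomial (mono (u 0 + 1) (u 1) (u 2 + 1)) (-a)) := by
      simp only [monomial_mono, map_mul, map_neg, map_ofNat]; ring
    rw [expand, phi_add, phi_add, phi_monomial, phi_monomial, phi_monomial]
    linear_combination a * Lg1 (u 0) (u 1) (u 2)

lemma phi_mul_g2 (c : MvPolynomial (Fin 3) ℚ) :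
    phi (c * (2 * X 1 * X 2 - X 1 * X 0)) = 0 := by
  induction c using MvPolynomial.induction_on' with
  | add p q hp hq => rw [add_mul, phi_add, hp, hq, add_zero]
  | monomial u a =>
    rw [eq_mono u]
    have expand : monomial (mono (u 0) (u 1) (u 2)) a * (2 * X 1 * X 2 - X 1 * X 0)
        = monomial (mono (u 0) (u 1 + 1) (u 2 + 1)) (2 * a)
          + monomial (mono (u 0 + 1) (u 1 + 1) (u 2)) (-a) := by
      simp only [monomial_mono, map_mul, map_neg, map_ofNat]; ring
    rw [expand, phi_add, phi_monomial, phi_monomial]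
    linear_combination a * Lg2 (u 0) (u 1) (u 2)

lemma phi_mul_g3 (c : MvPolynomial (Fin 3) ℚ) :
    phi (c * (12 * X 1 ^ 2 + X 1 * X 0)) = 0 := by
  induction c using MvPolynomial.induction_on' with
  | add p q hp hq => rw [add_mul, phi_add, hp, hq, add_zero]
  | monomial u a =>
    rw [eq_mono u]
    have expand : monomial (mono (u 0) (u 1) (u 2)) a * (12 * X 1 ^ 2 + X 1 * X 0)
        = monomial (mono (u 0) (u 1 + 2) (u 2)) (12 * a)
          + monomial (mono (u 0 + 1) (u 1 + 1) (u 2)) a := by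
      simp only [monomial_mono, map_mul, map_neg, map_ofNat]; ring
    rw [expand, phi_add, phi_monomial, phi_monomial]
    linear_combination a * Lg3 (u 0) (u 1) (u 2)

lemma phi_mul_g4 (c : MvPolynomial (Fin 3) ℚ) :
    phi (c * (X 0 ^ 2 * X 2)) = 0 := by
  induction c using MvPolynomial.induction_on' with
  | add p q hp hq => rw [add_mul, phi_add, hp, hq, add_zero]
  | monomial u a =>
    rw [eq_mono u]
    have expand : monomial (mono (u 0) (u 1) (u 2)) a * (X 0 ^ 2 * X 2)
        = monomial (mono (u 0 + 2) (u 1) (u 2 + 1)) a := by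
      simp only [monomial_mono, map_mul, map_neg, map_ofNat]; ring
    rw [expand, phi_monomial]
    linear_combination a * Lg4 (u 0) (u 1) (u 2)

lemma phi_mul_g5 (c : MvPolynomial (Fin 3) ℚ) :
    phi (c * (3 * X 0 ^ 3 + 32 * X 1 * X 0 ^ 2)) = 0 := by
  induction c using MvPolynomial.induction_on' with
  | add p q hp hq => rw [add_mul, phi_add, hp, hq, add_zero]
  | monomial u a =>
    rw [eq_mono u]
    have expand : monomial (mono (u 0) (u 1) (u 2)) a * (3 * X 0 ^ 3 + 32 * X 1 * X 0 ^ 2)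
        = monomial (mono (u 0 + 3) (u 1) (u 2)) (3 * a)
          + monomial (mono (u 0 + 2) (u 1 + 1) (u 2)) (32 * a) := by
      simp only [monomial_mono, map_mul, map_neg, map_ofNat]; ring
    rw [expand, phi_add, phi_monomial, phi_monomial]
    linear_combination a * Lg5 (u 0) (u 1) (u 2)

lemma phi_vanish {p : MvPolynomial (Fin 3) ℚ} (hp : p ∈ Jminus) : phi p = 0 := by
  have h : ∀ c : MvPolynomial (Fin 3) ℚ, phi (c * p) = 0 := by
    refine Submodule.span_induction (p := fun x _ => ∀ c, phi (c * x) = 0)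
      ?_ ?_ ?_ ?_ hp
    · rintro x (rfl | rfl | rfl | rfl | rfl) c
      · simpa only [a0, a1, b0] using phi_mul_g1 c
      · simpa only [a0, a1, b0] using phi_mul_g2 c
      · simpa only [a0, a1, b0] using phi_mul_g3 c
      · simpa only [a0, a1, b0] using phi_mul_g4 c
      · simpa only [a0, a1, b0] using phi_mul_g5 c
    · intro c; rw [mul_zero]; exact phi_zero
    · intro x y _ _ hx hy c; rw [mul_add, phi_add, hx, hy, add_zero]
    · intro r x _ hx c
      rw [smul_eq_mul, show c * (r * x) = c * r * x by ring]
      exact hx (c * r)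
  simpa using h 1

lemma phi_target : phi (a1 * a0 ^ 2) = 144 := by
  have h : a1 * a0 ^ 2 = monomial (mono 2 1 0) (1 : ℚ) := by
    rw [monomial_mono, map_one]; simp only [a0, a1]; ring
  rw [h, phi_monomial]
  norm_num [L]

lemma mk_target_ne : Ideal.Quotient.mk Jminus (a1 * a0 ^ 2) ≠ 0 := by
  intro h
  rw [Ideal.Quotient.eq_zero_iff_mem] at h
  have := phi_vanish h
  rw [phi_target] at this
  norm_num at this

lemma span_of_scaled (n e : ℚ) (hn : n ≠ 0) (x : MvPolynomial (Fin 3) ℚ)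
    (hmem : C n * x - C e * (a1 * a0 ^ 2) ∈ Jminus) :
    Ideal.Quotient.mk Jminus x = (e / n) • Ideal.Quotient.mk Jminus (a1 * a0 ^ 2) := by
  have h1 : n • Ideal.Quotient.mk Jminus x = e • Ideal.Quotient.mk Jminus (a1 * a0 ^ 2) := by
    rw [mk_smul, mk_smul, ← sub_eq_zero, ← map_sub, Ideal.Quotient.eq_zero_iff_mem]
    exact hmem
  have h2 : Ideal.Quotient.mk Jminus x = n⁻¹ • (n • Ideal.Quotient.mk Jminus x) := by
    rw [smul_smul, inv_mul_cancel₀ hn, one_smul]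
  rw [h2, h1, smul_smul, div_eq_inv_mul]

lemma red300 : Ideal.Quotient.mk Jminus (monomial (mono 3 0 0) (1 : ℚ))
    = ((-32) / 3 : ℚ) • Ideal.Quotient.mk Jminus (a1 * a0 ^ 2) := by
  refine span_of_scaled 3 (-32) (by norm_num) _ ?_
  have h : C (3:ℚ) * monomial (mono 3 0 0) (1:ℚ) - C (-32:ℚ) * (a1 * a0 ^ 2)
      = 0 * (3 * b0 ^ 2 + 6 * a1 * b0 - a0 * b0) + 0 * (2 * a1 * b0 - a1 * a0)
      + 0 * (12 * a1 ^ 2 + a1 * a0) + 0 * (a0 ^ 2 * b0)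
      + 1 * (3 * a0 ^ 3 + 32 * a1 * a0 ^ 2) := by
    rw [monomial_mono, map_one]
    simp only [a0, a1, b0, map_ofNat, map_neg]
    ring
  rw [h]; exact comb_mem _ _ _ _ _

lemma red210 : Ideal.Quotient.mk Jminus (monomial (mono 2 1 0) (1 : ℚ))
    = (1 / 1 : ℚ) • Ideal.Quotient.mk Jminus (a1 * a0 ^ 2) := by
  refine span_of_scaled 1 1 (by norm_num) _ ?_
  have h : C (1:ℚ) * monomial (mono 2 1 0) (1:ℚ) - C (1:ℚ) * (a1 * a0 ^ 2)
      = 0 * (3 * b0 ^ 2 + 6 * a1 * b0 - a0 * b0) + 0 * (2 * a1 * b0 - a1 * a0)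
      + 0 * (12 * a1 ^ 2 + a1 * a0) + 0 * (a0 ^ 2 * b0)
      + 0 * (3 * a0 ^ 3 + 32 * a1 * a0 ^ 2) := by
    rw [monomial_mono, map_one]
    simp only [a0, a1, b0, map_one]
    ring
  rw [h]; exact comb_mem _ _ _ _ _

lemma red201 : Ideal.Quotient.mk Jminus (monomial (mono 2 0 1) (1 : ℚ))
    = (0 / 1 : ℚ) • Ideal.Quotient.mk Jminus (a1 * a0 ^ 2) := by
  refine span_of_scaled 1 0 (by norm_num) _ ?_
  have h : C (1:ℚ) * monomial (mono 2 0 1) (1:ℚ) - C (0:ℚ) * (a1 * a0 ^ 2)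
      = 0 * (3 * b0 ^ 2 + 6 * a1 * b0 - a0 * b0) + 0 * (2 * a1 * b0 - a1 * a0)
      + 0 * (12 * a1 ^ 2 + a1 * a0) + 1 * (a0 ^ 2 * b0)
      + 0 * (3 * a0 ^ 3 + 32 * a1 * a0 ^ 2) := by
    rw [monomial_mono, map_one]
    simp only [a0, a1, b0, map_one, map_zero]
    ring
  rw [h]; exact comb_mem _ _ _ _ _

lemma red120 : Ideal.Quotient.mk Jminus (monomial (mono 1 2 0) (1 : ℚ))
    = ((-1) / 12 : ℚ) • Ideal.Quotient.mk Jminus (a1 * a0 ^ 2) := by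
  refine span_of_scaled 12 (-1) (by norm_num) _ ?_
  have h : C (12:ℚ) * monomial (mono 1 2 0) (1:ℚ) - C (-1:ℚ) * (a1 * a0 ^ 2)
      = 0 * (3 * b0 ^ 2 + 6 * a1 * b0 - a0 * b0) + 0 * (2 * a1 * b0 - a1 * a0)
      + a0 * (12 * a1 ^ 2 + a1 * a0) + 0 * (a0 ^ 2 * b0)
      + 0 * (3 * a0 ^ 3 + 32 * a1 * a0 ^ 2) := by
    rw [monomial_mono, map_one]
    simp only [a0, a1, b0, map_ofNat, map_neg, map_one]
    ring
  rw [h]; exact comb_mem _ _ _ _ _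

lemma red111 : Ideal.Quotient.mk Jminus (monomial (mono 1 1 1) (1 : ℚ))
    = (1 / 2 : ℚ) • Ideal.Quotient.mk Jminus (a1 * a0 ^ 2) := by
  refine span_of_scaled 2 1 (by norm_num) _ ?_
  have h : C (2:ℚ) * monomial (mono 1 1 1) (1:ℚ) - C (1:ℚ) * (a1 * a0 ^ 2)
      = 0 * (3 * b0 ^ 2 + 6 * a1 * b0 - a0 * b0) + a0 * (2 * a1 * b0 - a1 * a0)
      + 0 * (12 * a1 ^ 2 + a1 * a0) + 0 * (a0 ^ 2 * b0)
      + 0 * (3 * a0 ^ 3 + 32 * a1 * a0 ^ 2) := by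
    rw [monomial_mono, map_one]
    simp only [a0, a1, b0, map_ofNat, map_one]
    ring
  rw [h]; exact comb_mem _ _ _ _ _

lemma red102 : Ideal.Quotient.mk Jminus (monomial (mono 1 0 2) (1 : ℚ))
    = ((-3) / 3 : ℚ) • Ideal.Quotient.mk Jminus (a1 * a0 ^ 2) := by
  refine span_of_scaled 3 (-3) (by norm_num) _ ?_
  have h : C (3:ℚ) * monomial (mono 1 0 2) (1:ℚ) - C (-3:ℚ) * (a1 * a0 ^ 2)
      = a0 * (3 * b0 ^ 2 + 6 * a1 * b0 - a0 * b0) + (-3 * a0) * (2 * a1 * b0 - a1 * a0)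
      + 0 * (12 * a1 ^ 2 + a1 * a0) + 1 * (a0 ^ 2 * b0)
      + 0 * (3 * a0 ^ 3 + 32 * a1 * a0 ^ 2) := by
    rw [monomial_mono, map_one]
    simp only [a0, a1, b0, map_ofNat, map_neg]
    ring
  rw [h]; exact comb_mem _ _ _ _ _

lemma red030 : Ideal.Quotient.mk Jminus (monomial (mono 0 3 0) (1 : ℚ))
    = (1 / 144 : ℚ) • Ideal.Quotient.mk Jminus (a1 * a0 ^ 2) := by
  refine span_of_scaled 144 1 (by norm_num) _ ?_
  have h : C (144:ℚ) * monomial (mono 0 3 0) (1:ℚ) - C (1:ℚ) * (a1 * a0 ^ 2)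
      = 0 * (3 * b0 ^ 2 + 6 * a1 * b0 - a0 * b0) + 0 * (2 * a1 * b0 - a1 * a0)
      + (12 * a1 - a0) * (12 * a1 ^ 2 + a1 * a0) + 0 * (a0 ^ 2 * b0)
      + 0 * (3 * a0 ^ 3 + 32 * a1 * a0 ^ 2) := by
    rw [monomial_mono, map_one]
    simp only [a0, a1, b0, map_ofNat, map_one]
    ring
  rw [h]; exact comb_mem _ _ _ _ _

lemma red021 : Ideal.Quotient.mk Jminus (monomial (mono 0 2 1) (1 : ℚ))
    = ((-1) / 24 : ℚ) • Ideal.Quotient.mk Jminus (a1 * a0 ^ 2) := by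
  refine span_of_scaled 24 (-1) (by norm_num) _ ?_
  have h : C (24:ℚ) * monomial (mono 0 2 1) (1:ℚ) - C (-1:ℚ) * (a1 * a0 ^ 2)
      = 0 * (3 * b0 ^ 2 + 6 * a1 * b0 - a0 * b0) + (12 * a1) * (2 * a1 * b0 - a1 * a0)
      + a0 * (12 * a1 ^ 2 + a1 * a0) + 0 * (a0 ^ 2 * b0)
      + 0 * (3 * a0 ^ 3 + 32 * a1 * a0 ^ 2) := by
    rw [monomial_mono, map_one]
    simp only [a0, a1, b0, map_ofNat, map_neg, map_one]
    ring
  rw [h]; exact comb_mem _ _ _ _ _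

lemma red012 : Ideal.Quotient.mk Jminus (monomial (mono 0 1 2) (1 : ℚ))
    = (1 / 4 : ℚ) • Ideal.Quotient.mk Jminus (a1 * a0 ^ 2) := by
  refine span_of_scaled 4 1 (by norm_num) _ ?_
  have h : C (4:ℚ) * monomial (mono 0 1 2) (1:ℚ) - C (1:ℚ) * (a1 * a0 ^ 2)
      = 0 * (3 * b0 ^ 2 + 6 * a1 * b0 - a0 * b0) + (2 * b0 + a0) * (2 * a1 * b0 - a1 * a0)
      + 0 * (12 * a1 ^ 2 + a1 * a0) + 0 * (a0 ^ 2 * b0)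
      + 0 * (3 * a0 ^ 3 + 32 * a1 * a0 ^ 2) := by
    rw [monomial_mono, map_one]
    simp only [a0, a1, b0, map_ofNat, map_one]
    ring
  rw [h]; exact comb_mem _ _ _ _ _

lemma red003 : Ideal.Quotient.mk Jminus (monomial (mono 0 0 3) (1 : ℚ))
    = ((-15) / 18 : ℚ) • Ideal.Quotient.mk Jminus (a1 * a0 ^ 2) := by
  refine span_of_scaled 18 (-15) (by norm_num) _ ?_
  have h : C (18:ℚ) * monomial (mono 0 0 3) (1:ℚ) - C (-15:ℚ) * (a1 * a0 ^ 2)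
      = (6 * b0 + 2 * a0) * (3 * b0 ^ 2 + 6 * a1 * b0 - a0 * b0)
      + (-(18 * b0 + 15 * a0)) * (2 * a1 * b0 - a1 * a0)
      + 0 * (12 * a1 ^ 2 + a1 * a0) + 2 * (a0 ^ 2 * b0)
      + 0 * (3 * a0 ^ 3 + 32 * a1 * a0 ^ 2) := by
    rw [monomial_mono, map_one]
    simp only [a0, a1, b0, map_ofNat, map_neg]
    ring
  rw [h]; exact comb_mem _ _ _ _ _

lemma target_eq : a1 * a0 ^ 2 = monomial (mono 2 1 0) (1 : ℚ) := by
  rw [monomial_mono, map_one]; simp only [a0, a1]; ring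

lemma a03_eq : a0 ^ 3 = monomial (mono 3 0 0) (1 : ℚ) := by
  rw [monomial_mono, map_one]; simp only [a0]; ring

set_option maxHeartbeats 2000000 in
lemma hspan : gradedPiece 3 = Submodule.span ℚ {Ideal.Quotient.mk Jminus (a1 * a0 ^ 2)} := by
  apply le_antisymm
  · rintro x ⟨p, hp, rfl⟩
    have hp' : p.IsHomogeneous 3 := hp
    have hmk : (Ideal.Quotient.mkₐ ℚ Jminus).toLinearMap p = Ideal.Quotient.mk Jminus p := rfl
    rw [hmk]
    have hsum : Ideal.Quotient.mk Jminus p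
        = ∑ v ∈ p.support, Ideal.Quotient.mk Jminus (monomial v (coeff v p)) := by
      conv_lhs => rw [p.as_sum]
      rw [map_sum]
    rw [hsum]
    refine Submodule.sum_mem _ fun v hv => ?_
    have hdeg : v 0 + v 1 + v 2 = 3 := by
      have h3 := hp' (mem_support_iff.mp hv)
      simpa [Finsupp.weight_apply, Finsupp.sum_fintype, Fin.sum_univ_three] using h3
    have hv' : monomial v (coeff v p) = C (coeff v p) * monomial v (1 : ℚ) := by
      rw [C_mul_monomial, mul_one]
    rw [hv', ← mk_smul]
    refine Submodule.smul_mem _ _ ?_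
    obtain ⟨i, j, k, hsum, rfl⟩ : ∃ i j k, i + j + k = 3 ∧ v = mono i j k :=
      ⟨v 0, v 1, v 2, hdeg, eq_mono v⟩
    have h0 : i ≤ 3 := by omega
    have h1 : j ≤ 3 := by omega
    have h2 : k ≤ 3 := by omega
    interval_cases i <;> interval_cases j <;> interval_cases k <;>
      first
        | (exfalso; omega)
        | exact Submodule.mem_span_singleton.mpr ⟨_, red300.symm⟩
        | exact Submodule.mem_span_singleton.mpr ⟨_, red210.symm⟩
        | exact Submodule.mem_span_singleton.mpr ⟨_, red201.symm⟩
        | exact Submodule.mem_span_singleton.mpr ⟨_, red120.symm⟩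
        | exact Submodule.mem_span_singleton.mpr ⟨_, red111.symm⟩
        | exact Submodule.mem_span_singleton.mpr ⟨_, red102.symm⟩
        | exact Submodule.mem_span_singleton.mpr ⟨_, red030.symm⟩
        | exact Submodule.mem_span_singleton.mpr ⟨_, red021.symm⟩
        | exact Submodule.mem_span_singleton.mpr ⟨_, red012.symm⟩
        | exact Submodule.mem_span_singleton.mpr ⟨_, red003.symm⟩
  · rw [Submodule.span_le, Set.singleton_subset_iff]
    refine ⟨a1 * a0 ^ 2, ?_, rfl⟩
    show a1 * a0 ^ 2 ∈ homogeneousSubmodule (Fin 3) ℚ 3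
    rw [mem_homogeneousSubmodule, target_eq]
    refine isHomogeneous_monomial _ ?_
    rw [Finsupp.degree_eq_weight_one]
    simp [Finsupp.weight_apply, Finsupp.sum_fintype, Fin.sum_univ_three]

theorem stmt16 :
    Module.finrank ℚ (gradedPiece 3) = 1 ∧
    gradedPiece 3 = Submodule.span ℚ {Ideal.Quotient.mk Jminus (a1 * a0 ^ 2)} ∧
    Ideal.Quotient.mk Jminus (a0 ^ 3) =
      -(32 / 3 : ℚ) • Ideal.Quotient.mk Jminus (a1 * a0 ^ 2) := by
  refine ⟨?_, hspan, ?_⟩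
  · rw [hspan]
    exact finrank_span_singleton mk_target_ne
  · rw [a03_eq, red300]
    norm_num
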